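/- Let (L|K,v) be an Artin-Schreier extension of valued fields of characteristic p > 0. Then the set v(θ−K) = { v(θ−c) : c ∈ K } is the same for every choice of Artin-Schreier generator θ of L|K; it is an invariant of the extension. -/

import Mathlib

open Polynomial


lemma AS_monic (R : Type*) [CommRing R] [Nontrivial R] {p : ℕ} (h1 : 1 < p) :
    (X ^ p - X : R[X]).Monic := by
  apply monic_X_pow_sub
  rw [degree_X]
  exact_mod_cast h1

lemma AS_prod_zmod (p : ℕ) [Fact p.Prime] :
    ∏ a : ZMod p, (X - C a) = X ^ p - X := by
  classical
  have h1 : (1:ℕ) < p := (Fact.out : p.Prime).one_lt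
  have hq : Fintype.card (ZMod p) = p := ZMod.card p
  have hroots : (X ^ p - X : (ZMod p)[X]).roots = Finset.univ.val := by
    have := FiniteField.roots_X_pow_card_sub_X (ZMod p)
    rwa [hq] at this
  have hsp : Splits (X ^ p - X : (ZMod p)[X]) := by
    rw [splits_iff_card_roots, hroots, FiniteField.X_pow_card_sub_X_natDegree_eq _ h1]
    simp [hq]
  have := hsp.eq_prod_roots_of_monic (AS_monic (ZMod p) h1)
  rw [hroots] at this
  rw [Finset.prod, this]

lemma AS_prod_field (L : Type*) [Field L] (p : ℕ) [Fact p.Prime] [CharP L p] :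
    ∏ i : ZMod p, (X - C ((ZMod.castHom dvd_rfl L) i)) = X ^ p - X := by
  have := congrArg (Polynomial.map (ZMod.castHom dvd_rfl L)) (AS_prod_zmod p)
  simpa [Polynomial.map_prod, Polynomial.map_sub, Polynomial.map_pow] using this

lemma AS_root_mem (L : Type*) [Field L] (p : ℕ) [Fact p.Prime] [CharP L p]
    {x : L} (hx : x ^ p = x) : ∃ i : ZMod p, (ZMod.castHom dvd_rfl L) i = x := by
  have h := congrArg (Polynomial.eval x) (AS_prod_field L p)
  rw [eval_prod, eval_sub, eval_pow, eval_X] at h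
  simp only [eval_sub, eval_X, eval_C] at h
  rw [hx, sub_self] at h
  obtain ⟨i, -, hi⟩ := Finset.prod_eq_zero_iff.mp h
  exact ⟨i, (sub_eq_zero.mp hi).symm⟩

lemma AS_galois {K L : Type*} [Field K] [Field L] [Algebra K L]
    (p : ℕ) [Fact p.Prime] [CharP K p] {θ : L}
    (hgen : IntermediateField.adjoin K {θ} = ⊤) {b : K}
    (hb : algebraMap K L b = θ ^ p - θ) :
    FiniteDimensional K L ∧ IsGalois K L := by
  have hp : (Fact.out : p.Prime) = Fact.out := rfl
  have h1 : (1:ℕ) < p := (Fact.out : p.Prime).one_lt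
  haveI charL : CharP L p := charP_of_injective_algebraMap (algebraMap K L).injective p
  set φ : ZMod p →+* L := ZMod.castHom dvd_rfl L with hφ
  set f : K[X] := X ^ p - X - C b with hf
  have hfm : f.Monic := by
    have : f = X ^ p - (X + C b) := by rw [hf]; ring
    rw [this]
    apply monic_X_pow_sub
    rw [degree_X_add_C]
    exact_mod_cast h1
  have haev : aeval θ f = 0 := by
    simp [hf, map_sub, aeval_X_pow, ← hb]
  have hint : IsIntegral K θ := ⟨f, hfm, by simpa [Polynomial.aeval_def] using haev⟩
  haveI : FiniteDimensional K L := by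
    haveI := IntermediateField.adjoin.finiteDimensional hint
    have : FiniteDimensional K (⊤ : IntermediateField K L) := hgen ▸ inferInstance
    exact IntermediateField.topEquiv.toLinearEquiv.finiteDimensional
  -- the product decomposition over L
  have hprodL : (X ^ p - X - C (θ ^ p - θ) : L[X]) = ∏ i : ZMod p, (X - C (θ + φ i)) := by
    have h := congrArg (aeval (X - C θ) : L[X] →ₐ[L] L[X]) (AS_prod_field L p)
    rw [map_prod, map_sub, map_pow, aeval_X] at h
    have hchar : ((X - C θ) ^ p : L[X]) = X ^ p - C θ ^ p := sub_pow_char _ _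
    rw [hchar] at h
    calc (X ^ p - X - C (θ ^ p - θ) : L[X])
        = X ^ p - C θ ^ p - (X - C θ) := by rw [C_sub, C_pow]; ring
      _ = ∏ i : ZMod p, (X - C (θ + φ i)) := by
          rw [← h]
          apply Finset.prod_congr rfl
          intro i _
          rw [map_sub, aeval_X, aeval_C, Polynomial.algebraMap_eq, C_add]
          ring
  have hmap : f.map (algebraMap K L) = ∏ i : ZMod p, (X - C (θ + φ i)) := by
    rw [hf]
    rw [Polynomial.map_sub, Polynomial.map_sub, Polynomial.map_pow, map_X, map_C, hb, hprodL]
  have hsplits : Splits (f.map (algebraMap K L)) := by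
    rw [hmap]
    exact Splits.prod fun i _ => Splits.X_sub_C _
  have hθroot : θ ∈ f.rootSet L := by
    rw [mem_rootSet]
    exact ⟨hfm.ne_zero, haev⟩
  have hadj : Algebra.adjoin K (f.rootSet L) = ⊤ := by
    have h1' : (IntermediateField.adjoin K {θ}).toSubalgebra = Algebra.adjoin K {θ} :=
      IntermediateField.adjoin_simple_toSubalgebra_of_isAlgebraic hint.isAlgebraic
    have h2 : Algebra.adjoin K ({θ} : Set L) = ⊤ := by
      rw [← h1', hgen, IntermediateField.top_toSubalgebra]
    rw [eq_top_iff, ← h2]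
    exact Algebra.adjoin_mono (Set.singleton_subset_iff.mpr hθroot)
  haveI : IsSplittingField K L f := ⟨hsplits, hadj⟩
  have hderiv : derivative f = -1 := by
    rw [hf]
    simp [derivative_X_pow, CharP.cast_eq_zero K p]
  have hsep : f.Separable := by
    rw [Polynomial.Separable, hderiv]
    exact ⟨0, -1, by ring⟩
  exact ⟨inferInstance, IsGalois.of_separable_splitting_field hsep⟩

lemma AS_fix_gen {K L : Type*} [Field K] [Field L] [Algebra K L] {θ : L}
    (hint : IsIntegral K θ) (hgen : IntermediateField.adjoin K {θ} = ⊤)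
    {τ : L ≃ₐ[K] L} (h : τ θ = θ) : τ = 1 := by
  have h2 : Algebra.adjoin K ({θ} : Set L) = ⊤ := by
    rw [← IntermediateField.adjoin_simple_toSubalgebra_of_isAlgebraic hint.isAlgebraic, hgen,
      IntermediateField.top_toSubalgebra]
  have key : AlgHom.equalizer (τ : L →ₐ[K] L) (AlgHom.id K L) = ⊤ := by
    rw [eq_top_iff, ← h2]
    apply Algebra.adjoin_le
    intro x hx
    rw [Set.mem_singleton_iff] at hx
    subst hx
    exact h
  have := AlgHom.equalizer_eq_top.mp key
  ext x
  exact congrArg (fun f => f x) this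

lemma AS_fixed_mem_bot {K L : Type*} [Field K] [Field L] [Algebra K L]
    [FiniteDimensional K L] [IsGalois K L] {x : L}
    (hx : ∀ τ : L ≃ₐ[K] L, τ x = x) : x ∈ (⊥ : IntermediateField K L) := by
  have h := IsGalois.fixedField_fixingSubgroup (⊥ : IntermediateField K L)
  rw [← h]
  exact fun g => hx g

lemma AS_val_one {Γ : Type*} [LinearOrderedCommGroupWithZero Γ] {x : Γ} {n : ℕ}
    (hn : n ≠ 0) (h : x ^ n = 1) : x = 1 := by
  rcases lt_trichotomy x 1 with hlt | he | hgt
  · have := pow_lt_one₀ zero_le' hlt hn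
    rw [h] at this
    exact absurd this (lt_irrefl _)
  · exact he
  · have := one_lt_pow₀ hgt hn
    rw [h] at this
    exact absurd this (lt_irrefl _)

lemma AS_rel {K L : Type*} [Field K] [Field L] [Algebra K L]
    (p : ℕ) [Fact p.Prime] [CharP K p] [FiniteDimensional K L] [IsGalois K L]
    (hKL : (⊥ : IntermediateField K L) ≠ ⊤)
    {θ θ' : L} (hgen : IntermediateField.adjoin K {θ} = ⊤)
    (hb : θ ^ p - θ ∈ Set.range (algebraMap K L))
    (hgen' : IntermediateField.adjoin K {θ'} = ⊤)
    (hb' : θ' ^ p - θ' ∈ Set.range (algebraMap K L)) :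
    ∃ j c : K, j ≠ 0 ∧ j ^ (p - 1) = 1 ∧
      θ' = algebraMap K L j * θ + algebraMap K L c := by
  classical
  have hp : p.Prime := Fact.out
  haveI charL : CharP L p := charP_of_injective_algebraMap (algebraMap K L).injective p
  set φ : ZMod p →+* L := ZMod.castHom dvd_rfl L with hφdef
  set φK : ZMod p →+* K := ZMod.castHom dvd_rfl K with hφKdef
  have hφ : ∀ i : ZMod p, algebraMap K L (φK i) = φ i := by
    have h : (algebraMap K L).comp φK = φ := RingHom.ext_zmod _ _
    intro i; rw [← h]; rfl
  have hφinj : Function.Injective φ := φ.injective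
  -- τ fixes elements in the image of φ
  have hfixφ : ∀ (τ : L ≃ₐ[K] L) (i : ZMod p), τ (φ i) = φ i := fun τ i => by
    rw [← hφ i]; exact τ.commutes _
  -- the cocycle maps
  have hroot : ∀ (x : L), x ^ p - x ∈ Set.range (algebraMap K L) →
      ∀ τ : L ≃ₐ[K] L, ∃ i : ZMod p, φ i = τ x - x := by
    intro x hx τ
    obtain ⟨b, hbx⟩ := hx
    have hfix : τ (x ^ p - x) = x ^ p - x := by rw [← hbx]; exact τ.commutes _
    rw [map_sub, map_pow] at hfix
    apply AS_root_mem L p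
    have : (τ x - x) ^ p = (τ x) ^ p - x ^ p := sub_pow_char _ _
    rw [this]
    have hτxp : (τ x) ^ p = x ^ p - x + τ x := by linear_combination hfix
    rw [hτxp]; ring
  choose eps heps using hroot θ hb
  choose eps' heps' using hroot θ' hb'
  have hint : IsIntegral K θ := IsIntegral.of_finite K θ
  have hint' : IsIntegral K θ' := IsIntegral.of_finite K θ'
  -- eps is a homomorphism
  have htheta : ∀ τ : L ≃ₐ[K] L, τ θ = θ + φ (eps τ) := fun τ => by
    have := heps τ; linear_combination -this
  have htheta' : ∀ τ : L ≃ₐ[K] L, τ θ' = θ' + φ (eps' τ) := fun τ => by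
    have := heps' τ; linear_combination -this
  have hepsmul : ∀ σ τ : L ≃ₐ[K] L, eps (σ * τ) = eps σ + eps τ := by
    intro σ τ
    apply hφinj
    rw [map_add, heps _, AlgEquiv.mul_apply, htheta τ, map_add, htheta σ, hfixφ]
    ring
  have hepsone : eps 1 = 0 := by
    apply hφinj
    rw [heps 1, map_zero]
    simp
  have hepszero : ∀ τ : L ≃ₐ[K] L, eps τ = 0 → τ = 1 := by
    intro τ h
    apply AS_fix_gen hint hgen
    rw [htheta τ, h, map_zero, add_zero]
  have hepszero' : ∀ τ : L ≃ₐ[K] L, eps' τ = 0 → τ = 1 := by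
    intro τ h
    apply AS_fix_gen hint' hgen'
    rw [htheta' τ, h, map_zero, add_zero]
  -- the character
  set χ : (L ≃ₐ[K] L) →* Multiplicative (ZMod p) :=
    { toFun := fun τ => Multiplicative.ofAdd (eps τ)
      map_one' := by show Multiplicative.ofAdd (eps 1) = 1; rw [hepsone]; rfl
      map_mul' := fun σ τ => by show Multiplicative.ofAdd (eps (σ * τ)) = Multiplicative.ofAdd (eps σ) * Multiplicative.ofAdd (eps τ); rw [hepsmul]; rfl } with hχdef
  have hχinj : Function.Injective χ := by
    rw [injective_iff_map_eq_one]
    intro τ hτ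
    exact hepszero τ (by simpa [hχdef] using hτ)
  -- there is σ moving θ
  have hθnotbot : θ ∉ (⊥ : IntermediateField K L) := by
    intro h
    apply hKL
    apply le_antisymm bot_le
    rw [← hgen]
    exact IntermediateField.adjoin_le_iff.mpr (Set.singleton_subset_iff.mpr h)
  obtain ⟨σ, hσ⟩ : ∃ σ : L ≃ₐ[K] L, σ θ ≠ θ := by
    by_contra h
    push_neg at h
    exact hθnotbot (AS_fixed_mem_bot h)
  have hσne : σ ≠ 1 := fun h => hσ (by rw [h]; rfl)
  haveI : Nontrivial (L ≃ₐ[K] L) := ⟨⟨σ, 1, hσne⟩⟩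
  -- card = p
  have hcard : Nat.card (L ≃ₐ[K] L) = p := by
    have hdvd : Nat.card (L ≃ₐ[K] L) ∣ p := by
      have h1 : Nat.card (L ≃ₐ[K] L) = Nat.card χ.range :=
        Nat.card_congr (MonoidHom.ofInjective hχinj).toEquiv
      have h2 : Nat.card χ.range ∣ Nat.card (Multiplicative (ZMod p)) :=
        Subgroup.card_subgroup_dvd_card χ.range
      rw [h1]
      simpa [Nat.card_eq_fintype_card, ZMod.card] using h2
    rcases (hp.eq_one_or_self_of_dvd _ hdvd) with h | h
    · exfalso
      have := Finite.one_lt_card (α := (L ≃ₐ[K] L))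
      omega
    · exact h
  have horder : orderOf σ = p := by
    have hdvd : orderOf σ ∣ p := hcard ▸ orderOf_dvd_natCard σ
    rcases hp.eq_one_or_self_of_dvd _ hdvd with h | h
    · exact absurd (orderOf_eq_one_iff.mp h) hσne
    · exact h
  have hzpow : ∀ τ : L ≃ₐ[K] L, ∃ k : ℤ, σ ^ k = τ := by
    intro τ
    have : Subgroup.zpowers σ = ⊤ := by
      apply Subgroup.eq_top_of_card_eq
      rw [Nat.card_zpowers, horder, hcard]
    have := this ▸ Subgroup.mem_top τ
    exact this
  -- eps of powers
  have hepspow : ∀ k : ℤ, eps (σ ^ k) = k • eps σ := by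
    intro k
    have := map_zpow χ σ k
    have h2 : (χ (σ ^ k)).toAdd = ((χ σ) ^ k).toAdd := by rw [this]
    simpa [hχdef] using h2
  set χ' : (L ≃ₐ[K] L) →* Multiplicative (ZMod p) :=
    { toFun := fun τ => Multiplicative.ofAdd (eps' τ)
      map_one' := by
        show Multiplicative.ofAdd (eps' 1) = 1
        have : eps' 1 = 0 := by apply hφinj; rw [heps' 1, map_zero]; simp
        rw [this]; rfl
      map_mul' := fun σ₁ τ₁ => by
        show Multiplicative.ofAdd (eps' (σ₁ * τ₁)) =
          Multiplicative.ofAdd (eps' σ₁) * Multiplicative.ofAdd (eps' τ₁)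
        have : eps' (σ₁ * τ₁) = eps' σ₁ + eps' τ₁ := by
          apply hφinj
          rw [map_add, heps' _, AlgEquiv.mul_apply, htheta' τ₁, map_add, htheta' σ₁, hfixφ]
          ring
        rw [this]; rfl } with hχ'def
  have hepspow2 : ∀ k : ℤ, eps' (σ ^ k) = k • eps' σ := by
    intro k
    have h2 : (χ' (σ ^ k)).toAdd = ((χ' σ) ^ k).toAdd := by rw [map_zpow]
    simpa [hχ'def] using h2
  have hepsσ : eps σ ≠ 0 := by
    intro h
    exact hσ (by rw [htheta σ, h, map_zero, add_zero])
  have heps'σ : eps' σ ≠ 0 := fun h => hσne (hepszero' σ h)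
  set j : ZMod p := eps' σ * (eps σ)⁻¹ with hjdef
  have hjne : j ≠ 0 := mul_ne_zero heps'σ (inv_ne_zero hepsσ)
  have hjσ : eps' σ = j * eps σ := by
    rw [hjdef]
    field_simp
  have hj : ∀ τ : L ≃ₐ[K] L, eps' τ = j * eps τ := by
    intro τ
    obtain ⟨k, rfl⟩ := hzpow τ
    rw [hepspow k, hepspow2 k, hjσ, mul_smul_comm]
  set c : L := θ' - φ j * θ with hcdef
  have hc : ∀ τ : L ≃ₐ[K] L, τ c = c := by
    intro τ
    rw [hcdef, map_sub, map_mul, htheta' τ, htheta τ, hfixφ, hj τ, map_mul]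
    ring
  obtain ⟨c₀, hc₀⟩ := IntermediateField.mem_bot.mp (AS_fixed_mem_bot hc)
  refine ⟨φK j, c₀, ?_, ?_, ?_⟩
  · intro h
    exact hjne (φK.injective (by rw [h, map_zero]))
  · rw [← map_pow, ZMod.pow_card_sub_one_eq_one hjne, map_one]
  · rw [hφ j, hc₀, hcdef]
    ring

/-- Let `(L|K,v)` be an Artin-Schreier extension of valued fields of
characteristic `p > 0`.  Then the set `v(θ−K) = { v(θ−c) : c ∈ K }` is the same for every
choice of Artin-Schreier generator `θ` of `L|K` (an element `θ` with `L = K(θ)` and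
`θ^p − θ ∈ K`); it is an invariant of the extension.  (Multiplicative notation for `v`.) -/
theorem statement12 {K L : Type*} [Field K] [Field L] [Algebra K L]
    {Γ : Type*} [LinearOrderedCommGroupWithZero Γ] (v : Valuation L Γ)
    (p : ℕ) [Fact p.Prime] [CharP K p]
    (hASext : ∃ θ₀ : L, IntermediateField.adjoin K {θ₀} = ⊤ ∧
      θ₀ ∉ Set.range (algebraMap K L) ∧ θ₀ ^ p - θ₀ ∈ Set.range (algebraMap K L)) :
    ∀ θ θ' : L,
      (IntermediateField.adjoin K {θ} = ⊤ ∧ θ ^ p - θ ∈ Set.range (algebraMap K L)) →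
      (IntermediateField.adjoin K {θ'} = ⊤ ∧ θ' ^ p - θ' ∈ Set.range (algebraMap K L)) →
      (Set.range fun c : K ↦ v (θ - algebraMap K L c)) =
        (Set.range fun c : K ↦ v (θ' - algebraMap K L c)) := by
  classical
  have hp : p.Prime := Fact.out
  obtain ⟨θ₀, hgen₀, hnot₀, hb₀⟩ := hASext
  rintro θ θ' ⟨hgen, hb⟩ ⟨hgen', hb'⟩
  obtain ⟨b₀, hb₀eq⟩ := hb₀
  obtain ⟨hfd, hgal⟩ := AS_galois p hgen₀ hb₀eq
  have hKL : (⊥ : IntermediateField K L) ≠ ⊤ := by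
    intro h
    exact hnot₀ (IntermediateField.mem_bot.mp (h ▸ IntermediateField.mem_top))
  obtain ⟨j, c, hj, hj1, hrel⟩ := AS_rel p hKL hgen hb hgen' hb'
  have hvj : v (algebraMap K L j) = 1 := by
    apply AS_val_one (n := p - 1)
    · have := hp.two_le; omega
    · rw [← map_pow, ← map_pow, hj1, map_one, map_one]
  have hjL : (algebraMap K L) j ≠ 0 := fun h => hj ((algebraMap K L).injective (by rw [h, map_zero]))
  ext γ
  simp only [Set.mem_range]
  constructor
  · rintro ⟨d, rfl⟩
    refine ⟨j * d + c, ?_⟩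
    have h : θ' - algebraMap K L (j * d + c) = algebraMap K L j * (θ - algebraMap K L d) := by
      rw [hrel, map_add, map_mul]; ring
    rw [h, map_mul, hvj, one_mul]
  · rintro ⟨d, rfl⟩
    refine ⟨(d - c) * j⁻¹, ?_⟩
    have h : θ' - algebraMap K L d = algebraMap K L j * (θ - algebraMap K L ((d - c) * j⁻¹)) := by
      rw [hrel, map_mul, map_sub, map_inv₀]
      field_simp
      ring
    rw [h, v.map_mul, hvj, one_mul]
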